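/- Let R be a UJ# ring. Then 2 ∈ J(R), i.e., the element 1 + 1 lies in the Jacobson radical of R. -/

import Mathlib

/-- `J#(R)`: the set of elements `z` such that `z ^ n` lies in the Jacobson radical
(the intersection of the maximal left ideals) for some `n ≥ 1`. -/
def Jsharp (R : Type*) [Ring R] : Set R :=
  {z : R | ∃ n : ℕ, 1 ≤ n ∧ z ^ n ∈ Ideal.jacobson (⊥ : Ideal R)}

/-- A ring is a `UJ#` ring if `u - 1 ∈ J#(R)` for every unit `u`. -/
def IsUJsharp (R : Type*) [Ring R] : Prop :=
  ∀ u : Rˣ, ((u : R) - 1) ∈ Jsharp R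

theorem isUJsharp_two_mem_jacobson (R : Type*) [Ring R] (h : IsUJsharp R) :
    (2 : R) ∈ Ideal.jacobson (⊥ : Ideal R) := by
  obtain ⟨n, hn, hJ⟩ := h (-1)
  have hJ2 : (-2 : R) ^ n ∈ Ideal.jacobson (⊥ : Ideal R) := by
    have he : ((-1 : Rˣ) : R) - 1 = (-2 : R) := by push_cast; norm_num
    rwa [he] at hJ
  -- J(⊥) absorbs right multiplication
  have habs : ∀ x y : R, x ∈ Ideal.jacobson (⊥ : Ideal R) →
      x * y ∈ Ideal.jacobson (⊥ : Ideal R) := by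
    intro x y hx
    exact (Ideal.jacobson (⊥ : Ideal R)).mul_mem_right y hx
  rw [Ideal.mem_jacobson_iff]
  intro y
  set t : R := y * 2 with ht
  have hcomm : (-2 : R) * y = y * (-2 : R) := by
    rw [neg_mul, mul_neg, two_mul, mul_two]
  have htpow : (-t) ^ n = (-2 : R) ^ n * y ^ n := by
    have he : (-t : R) = (-2 : R) * y := by rw [ht]; noncomm_ring
    rw [he, Commute.mul_pow hcomm n]
  set w : R := (-t) ^ n with hw
  have hwJ : w ∈ Ideal.jacobson (⊥ : Ideal R) := by
    rw [htpow]; exact habs _ _ hJ2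
  -- get a left inverse z of (1 - w)
  obtain ⟨z, hz⟩ := Ideal.mem_jacobson_iff.1 hwJ (-1)
  rw [Ideal.mem_bot] at hz
  have hz1 : z * (1 - w) = 1 := by
    have h' : z - z * w - 1 = 0 := by rw [← hz]; noncomm_ring
    have := eq_of_sub_eq_zero h'
    rw [mul_sub, mul_one]; exact this
  -- geometric series: s * (t + 1) = 1 - w
  set s : R := ∑ i ∈ Finset.range n, (-t) ^ i with hs
  have hgeom : s * (t + 1) = 1 - w := by
    have hg : s * ((-t) - 1) = (-t) ^ n - 1 := geom_sum_mul (-t) n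
    have h2 : -(s * (t + 1)) = w - 1 := by
      rw [← mul_neg, neg_add', hg, hw]
    have h3 : -(s * (t + 1)) = -(1 - w) := by rw [h2, neg_sub]
    exact neg_injective h3
  refine ⟨z * s, ?_⟩
  rw [Ideal.mem_bot]
  have key : (z * s) * (t + 1) = 1 := by
    rw [mul_assoc, hgeom, hz1]
  have : z * s * (y * 2) + z * s - 1 = 0 := by
    have expand : z * s * (y * 2) + z * s = (z * s) * (t + 1) := by
      rw [← ht]; noncomm_ring
    rw [expand, key]; norm_num
  rw [← this]; noncomm_ring
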